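/- Let F be a field, n ≥ 1, and let M ∈ F^{n×n} be any matrix. Let Δ be the lower shift matrix and J the exchange matrix over F. Then rank(M J − Δ (M J) Δᵀ) ≤ rank(Δᵀ M − M Δ) + 1. -/

import Mathlib

open Matrix

/-- The lower shift matrix `Δ`, with ones just below the diagonal. -/
def shiftMatrix (R : Type*) [Zero R] [One R] (n : ℕ) : Matrix (Fin n) (Fin n) R :=
  Matrix.of fun j k => if (j : ℕ) = (k : ℕ) + 1 then 1 else 0

/-- The exchange (backward identity) matrix `J`, with ones on the antidiagonal. -/
def exchangeMatrix (R : Type*) [Zero R] [One R] (n : ℕ) : Matrix (Fin n) (Fin n) R :=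
  Matrix.of fun j k => if (j : ℕ) + (k : ℕ) + 1 = n then 1 else 0

lemma my_rank_add_le {F : Type*} [Field F] {m n : ℕ} (A B : Matrix (Fin m) (Fin n) F) :
    (A + B).rank ≤ A.rank + B.rank := by
  classical
  simp only [Matrix.rank]
  have h : LinearMap.range (A + B).mulVecLin ≤
      LinearMap.range A.mulVecLin ⊔ LinearMap.range B.mulVecLin := by
    rintro x ⟨v, rfl⟩
    simp only [Matrix.mulVecLin_add, LinearMap.add_apply]
    exact Submodule.add_mem_sup ⟨v, rfl⟩ ⟨v, rfl⟩
  calc Module.finrank F ↥(LinearMap.range (A + B).mulVecLin)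
      ≤ Module.finrank F ↥(LinearMap.range A.mulVecLin ⊔ LinearMap.range B.mulVecLin) :=
        Submodule.finrank_mono h
    _ ≤ _ := Submodule.finrank_add_le_finrank_add_finrank _ _

lemma indic_mul_indic {F : Type*} [Field F] (P Q : Prop) [Decidable P] [Decidable Q] :
    (if P then (1:F) else 0) * (if Q then 1 else 0) = if P ∧ Q then 1 else 0 := by
  split_ifs <;> simp_all

lemma exch_mul_shiftT (F : Type*) [Field F] (n : ℕ) :
    exchangeMatrix F n * (shiftMatrix F n)ᵀ = shiftMatrix F n * exchangeMatrix F n := by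
  ext j k
  simp only [mul_apply, shiftMatrix, exchangeMatrix, of_apply, transpose_apply, indic_mul_indic]
  rcases j with ⟨j, hj⟩
  rcases k with ⟨k, hk⟩
  simp only [Fin.val_mk]
  by_cases h : j + k = n
  · have hj1 : 1 ≤ j := by omega
    have hk1 : 1 ≤ k := by omega
    rw [Finset.sum_eq_single (⟨k - 1, by omega⟩ : Fin n),
        Finset.sum_eq_single (⟨j - 1, by omega⟩ : Fin n)]
    · simp only [Fin.val_mk]
      rw [if_pos ⟨by omega, by omega⟩, if_pos ⟨by omega, by omega⟩]
    · rintro ⟨m, hm⟩ - hne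
      have hm' : m ≠ j - 1 := fun hh => hne (by simp [hh])
      simp only [Fin.val_mk]
      rw [if_neg]
      rintro ⟨h1, h2⟩; omega
    · exact fun habs => absurd (Finset.mem_univ _) habs
    · rintro ⟨m, hm⟩ - hne
      have hm' : m ≠ k - 1 := fun hh => hne (by simp [hh])
      simp only [Fin.val_mk]
      rw [if_neg]
      rintro ⟨h1, h2⟩; omega
    · exact fun habs => absurd (Finset.mem_univ _) habs
  · rw [Finset.sum_eq_zero, Finset.sum_eq_zero]
    · rintro ⟨m, hm⟩ -
      simp only [Fin.val_mk]
      rw [if_neg]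
      rintro ⟨h1, h2⟩; omega
    · rintro ⟨m, hm⟩ -
      simp only [Fin.val_mk]
      rw [if_neg]
      rintro ⟨h1, h2⟩; omega
/-- Column vector with a one in the first entry. -/
def firstCol (F : Type*) [Field F] (n : ℕ) : Matrix (Fin n) (Fin 1) F :=
  Matrix.of fun j _ => if (j : ℕ) = 0 then 1 else 0

lemma shift_mul_shiftT (F : Type*) [Field F] (n : ℕ) :
    shiftMatrix F n * (shiftMatrix F n)ᵀ = 1 - firstCol F n * (firstCol F n)ᵀ := by
  ext j k
  simp only [mul_apply, Matrix.sub_apply, one_apply, transpose_apply, of_apply, shiftMatrix,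
    firstCol, indic_mul_indic, Fin.sum_univ_one]
  rcases j with ⟨j, hj⟩
  rcases k with ⟨k, hk⟩
  simp only [Fin.val_mk, Fin.mk.injEq]
  by_cases h0 : 1 ≤ j
  · rw [Finset.sum_eq_single (⟨j - 1, by omega⟩ : Fin n)]
    · simp only [Fin.val_mk]
      split_ifs <;> first | (exfalso; omega) | ring1
    · rintro ⟨m, hm⟩ - hne
      have hm' : m ≠ j - 1 := fun hh => hne (by simp [hh])
      simp only [Fin.val_mk]
      rw [if_neg]
      rintro ⟨h1, h2⟩; omega
    · exact fun habs => absurd (Finset.mem_univ _) habs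
  · rw [Finset.sum_eq_zero]
    · split_ifs <;> first | (exfalso; omega) | ring1
    · rintro ⟨m, hm⟩ -
      simp only [Fin.val_mk]
      rw [if_neg]
      rintro ⟨h1, h2⟩; omega

/-- Key rank inequality:
`rank(M J − Δ (M J) Δᵀ) ≤ rank(Δᵀ M − M Δ) + 1`. -/
theorem stein_rank_of_MJ_le (F : Type*) [Field F] (n : ℕ) (hn : 1 ≤ n)
    (M : Matrix (Fin n) (Fin n) F) :
    (M * exchangeMatrix F n -
        shiftMatrix F n * (M * exchangeMatrix F n) * (shiftMatrix F n)ᵀ).rank ≤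
      ((shiftMatrix F n)ᵀ * M - M * shiftMatrix F n).rank + 1 := by
  obtain ⟨Δ, hΔ⟩ : ∃ D, shiftMatrix F n = D := ⟨_, rfl⟩
  obtain ⟨J, hJ⟩ : ∃ D, exchangeMatrix F n = D := ⟨_, rfl⟩
  obtain ⟨A, hA⟩ : ∃ D, firstCol F n = D := ⟨_, rfl⟩
  have h1 := shift_mul_shiftT F n
  have h2 := exch_mul_shiftT F n
  rw [hΔ, hJ, hA] at *
  have key : M * J - Δ * (M * J) * Δᵀ
      = Δ * (Δᵀ * M - M * Δ) * J + A * Aᵀ * (M * J) := by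
    calc M * J - Δ * (M * J) * Δᵀ
        = M * J - Δ * M * (J * Δᵀ) := by rw [← mul_assoc, mul_assoc (Δ * M)]
      _ = M * J - Δ * M * (Δ * J) := by rw [h2]
      _ = (Δ * Δᵀ + A * Aᵀ) * M * J - Δ * M * Δ * J := by
          rw [h1]; noncomm_ring
      _ = Δ * (Δᵀ * M - M * Δ) * J + A * Aᵀ * (M * J) := by noncomm_ring
  rw [key]
  refine le_trans (my_rank_add_le _ _) (add_le_add ?_ ?_)
  · exact le_trans (rank_mul_le_left _ _) (rank_mul_le_right _ _)
  · calc (A * Aᵀ * (M * J)).rank ≤ (A * Aᵀ).rank := rank_mul_le_left _ _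
      _ ≤ A.rank := rank_mul_le_left _ _
      _ ≤ 1 := (A.rank_le_card_width).trans (by simp)
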